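/- Let a < b be real numbers, C ≥ 0, and let f : [a, b] → ℝ be continuous. Suppose that for every τ ∈ [a, b) there exists y ∈ (τ, b] such that |f(y) − f(τ)| ≤ C (y − τ). Then |f(b) − f(a)| ≤ C (b − a). -/
import Mathlib


/-- **Propagation of local Lipschitz bounds** (argument of Corollary 7.3): if a continuous
`f : [a,b] → ℝ` admits, at every `τ ∈ [a,b)`, a point `y ∈ (τ,b]` with
`|f(y) - f(τ)| ≤ C(y - τ)`, then `|f(b) - f(a)| ≤ C(b - a)`. -/
theorem lipschitz_bound_propagation (a b : ℝ) (hab : a < b) (C : ℝ) (hC : 0 ≤ C)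
    (f : ℝ → ℝ) (hf : ContinuousOn f (Set.Icc a b))
    (h : ∀ τ ∈ Set.Ico a b, ∃ y ∈ Set.Ioc τ b, |f y - f τ| ≤ C * (y - τ)) :
    |f b - f a| ≤ C * (b - a) := by
  set S : Set ℝ := Set.Icc a b ∩ {x | |f x - f a| ≤ C * (x - a)} with hS
  have haS : a ∈ S := by
    constructor
    · exact ⟨le_refl a, le_of_lt hab⟩
    · simp
  have hSne : S.Nonempty := ⟨a, haS⟩
  have hBdd : BddAbove S := ⟨b, fun x hx => hx.1.2⟩
  have hclosed : IsClosed S := by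
    have hg : ContinuousOn (fun x => |f x - f a| - C * (x - a)) (Set.Icc a b) := by
      apply ContinuousOn.sub
      · exact ((hf.sub continuousOn_const).abs)
      · exact (continuous_const.mul (continuous_id.sub continuous_const)).continuousOn
    have : S = Set.Icc a b ∩ (fun x => |f x - f a| - C * (x - a)) ⁻¹' Set.Iic 0 := by
      ext x
      simp [hS, sub_nonpos]
    rw [this]
    exact ContinuousOn.preimage_isClosed_of_isClosed hg isClosed_Icc isClosed_Iic
  set c := sSup S with hc
  have hcS : c ∈ S := hclosed.csSup_mem hSne hBdd
  have hcb : c ≤ b := hcS.1.2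
  have hac : a ≤ c := hcS.1.1
  have hcb' : c = b := by
    by_contra hne
    have hclt : c < b := lt_of_le_of_ne hcb hne
    obtain ⟨y, ⟨hy1, hy2⟩, hy3⟩ := h c ⟨hac, hclt⟩
    have hyS : y ∈ S := by
      refine ⟨⟨le_trans hac (le_of_lt hy1), hy2⟩, ?_⟩
      calc |f y - f a| ≤ |f y - f c| + |f c - f a| := by
            have := abs_sub_abs_le_abs_sub (f y - f a) (f c - f a)
            calc |f y - f a| = |(f y - f c) + (f c - f a)| := by ring_nf
              _ ≤ |f y - f c| + |f c - f a| := abs_add_le _ _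
        _ ≤ C * (y - c) + C * (c - a) := add_le_add hy3 hcS.2
        _ = C * (y - a) := by ring
    exact absurd (le_csSup hBdd hyS) (not_le.mpr hy1)
  have : |f b - f a| ≤ C * (b - a) := by
    have := hcS.2
    rwa [hcb'] at this
  exact this
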